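/- Let q > 0 be a real number with q + q⁻¹ ∈ ℤ, and let Y ⊆ ℤ be a finite set symmetric about zero (a ∈ Y if and only if −a ∈ Y). Then the polynomial ∏_{a ∈ Y} (X − q^a) is a monic polynomial with integer coefficients whose constant coefficient is 1 or −1. -/

import Mathlib

open Polynomial

lemma sym_int (q : ℝ) (hq0 : q ≠ 0) (hqz : ∃ z : ℤ, (z : ℝ) = q + q⁻¹) :
    ∀ a : ℤ, ∃ z : ℤ, (z : ℝ) = q ^ a + q ^ (-a) := by
  obtain ⟨t, ht⟩ := hqz
  have key : ∀ n : ℕ, (∃ z : ℤ, (z : ℝ) = q ^ n + q⁻¹ ^ n) ∧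
      (∃ z : ℤ, (z : ℝ) = q ^ (n + 1) + q⁻¹ ^ (n + 1)) := by
    intro n
    induction n with
    | zero => exact ⟨⟨2, by norm_num⟩, ⟨t, by simpa using ht⟩⟩
    | succ n ih =>
      obtain ⟨⟨z1, h1⟩, ⟨z2, h2⟩⟩ := ih
      refine ⟨⟨z2, h2⟩, ⟨t * z2 - z1, ?_⟩⟩
      have : q ^ (n + 2) + q⁻¹ ^ (n + 2)
          = (q + q⁻¹) * (q ^ (n + 1) + q⁻¹ ^ (n + 1)) - (q ^ n + q⁻¹ ^ n) := by
        have hqq : q * q⁻¹ = 1 := mul_inv_cancel₀ hq0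
        linear_combination (-(q⁻¹ ^ n) - q ^ n) * hqq
      push_cast
      rw [ht, h1, h2] at *
      rw [this]
  intro a
  obtain ⟨z, hz⟩ := (key a.natAbs).1
  refine ⟨z, ?_⟩
  rcases Int.natAbs_eq a with h | h
  · rw [h]
    simp only [neg_neg, zpow_neg, zpow_natCast, ← inv_pow]
    rw [hz]
  · rw [h]
    simp only [neg_neg, zpow_neg, zpow_natCast, ← inv_pow]
    rw [hz]; ring


lemma sym_prod_int (q : ℝ) (hq0 : q ≠ 0) (c : ℤ → ℤ)
    (hc : ∀ a : ℤ, (c a : ℝ) = q ^ a + q ^ (-a)) :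
    ∀ Y : Finset ℤ, (∀ a : ℤ, a ∈ Y ↔ -a ∈ Y) →
    ∃ Q : Polynomial ℤ,
      Q.map (Int.castRingHom ℝ) = ∏ a ∈ Y, (X - C (q ^ a)) ∧
      Q.Monic ∧ (Q.coeff 0 = 1 ∨ Q.coeff 0 = -1) := by
  intro Y
  induction Y using Finset.strongInduction with
  | _ Y ih =>
    intro hY
    by_cases h0 : Y = ∅
    · subst h0
      exact ⟨1, by simp, monic_one, Or.inl (by simp)⟩
    by_cases hz : (0 : ℤ) ∈ Y
    · have hsub : Y.erase 0 ⊂ Y := Finset.erase_ssubset hz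
      have hsym : ∀ a : ℤ, a ∈ Y.erase 0 ↔ -a ∈ Y.erase 0 := by
        intro a
        rw [Finset.mem_erase, Finset.mem_erase, hY a]
        constructor <;> rintro ⟨h1, h2⟩ <;> exact ⟨by omega, h2⟩
      obtain ⟨Q', hmap, hmon, hcoef⟩ := ih _ hsub hsym
      have hXm : ((X : ℤ[X]) - 1).Monic := by
        simpa using monic_X_sub_C (1 : ℤ)
      refine ⟨(X - 1) * Q', ?_, hXm.mul hmon, ?_⟩
      · rw [Polynomial.map_mul, hmap, ← Finset.mul_prod_erase _ _ hz]
        congr 1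
        simp
      · rw [mul_coeff_zero]
        have h1 : ((X : ℤ[X]) - 1).coeff 0 = -1 := by simp
        rw [h1]
        rcases hcoef with h | h <;> rw [h] <;> norm_num
    · obtain ⟨a, ha⟩ := Finset.nonempty_of_ne_empty h0
      have hane : a ≠ 0 := fun h => hz (h ▸ ha)
      have hna : -a ∈ Y := (hY a).1 ha
      have hnea : -a ≠ a := by omega
      have hm1 : -a ∈ Y.erase a := Finset.mem_erase.2 ⟨hnea, hna⟩
      have hsub : (Y.erase a).erase (-a) ⊂ Y :=
        Finset.ssubset_of_ssubset_of_subset (Finset.erase_ssubset hm1)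
          (Finset.erase_subset _ _)
      have hsym : ∀ b : ℤ, b ∈ (Y.erase a).erase (-a) ↔ -b ∈ (Y.erase a).erase (-a) := by
        intro b
        simp only [Finset.mem_erase]
        rw [hY b]
        constructor <;> rintro ⟨h1, h2, h3⟩ <;> exact ⟨by omega, by omega, h3⟩
      obtain ⟨Q', hmap, hmon, hcoef⟩ := ih _ hsub hsym
      have h1 : q ^ a * q ^ (-a) = 1 := by
        rw [← zpow_add₀ hq0]
        simp
      have hquad : ((X : ℝ[X]) - C (q ^ a)) * (X - C (q ^ (-a)))
          = X ^ 2 - C ((c a : ℝ)) * X + 1 := by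
        have expand : ((X : ℝ[X]) - C (q ^ a)) * (X - C (q ^ (-a)))
            = X ^ 2 - (C (q ^ a) + C (q ^ (-a))) * X + C (q ^ a) * C (q ^ (-a)) := by
          ring
        rw [expand, ← C_add, ← C_mul, h1, C_1, hc a]
      have hqm : ((X : ℤ[X]) ^ 2 - C (c a) * X + 1).Monic := by
        have hdeg : ((1 : ℤ[X]) - C (c a) * X).degree < 2 := by
          apply lt_of_le_of_lt (degree_sub_le _ _)
          simp only [degree_one, max_lt_iff]
          refine ⟨by norm_num, lt_of_le_of_lt (degree_C_mul_X_le _) ?_⟩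
          norm_num
        have := monic_X_pow_add hdeg
        have heq : (X : ℤ[X]) ^ 2 + (1 - C (c a) * X) = X ^ 2 - C (c a) * X + 1 := by ring
        rwa [heq] at this
      refine ⟨(X ^ 2 - C (c a) * X + 1) * Q', ?_, hqm.mul hmon, ?_⟩
      · rw [← Finset.mul_prod_erase _ _ ha, ← Finset.mul_prod_erase _ _ hm1, ← mul_assoc,
          hquad, Polynomial.map_mul, hmap]
        congr 1
        simp
      · rw [mul_coeff_zero]
        have h2 : ((X : ℤ[X]) ^ 2 - C (c a) * X + 1).coeff 0 = 1 := by simp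
        rw [h2]
        rcases hcoef with h | h <;> rw [h] <;> norm_num

/-- If `q > 0` with `q + q⁻¹ ∈ ℤ` and `Y ⊆ ℤ` is a finite set symmetric about zero, then
`∏_{a ∈ Y} (X − q^a)` is a monic polynomial with integer coefficients whose constant
coefficient is `1` or `−1`. -/
theorem stmt_17 (q : ℝ) (hq : 0 < q) (hqz : ∃ z : ℤ, (z : ℝ) = q + q⁻¹)
    (Y : Finset ℤ) (hY : ∀ a : ℤ, a ∈ Y ↔ -a ∈ Y) :
    ∃ Q : Polynomial ℤ,
      Q.map (Int.castRingHom ℝ) = ∏ a ∈ Y, (X - C (q ^ a)) ∧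
      Q.Monic ∧ (Q.coeff 0 = 1 ∨ Q.coeff 0 = -1) := by
  obtain ⟨c, hc⟩ := Classical.axiomOfChoice (sym_int q hq.ne' hqz)
  exact sym_prod_int q hq.ne' c hc Y hY
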